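/- Let F be an infinite field, let N be an odd positive integer, let α ∈ F with α ≠ 1, and let δ ∈ F be nonzero. Then there exists an invertible N×N matrix B over F with det B = δ such that 1 is a root of the characteristic polynomial of B^∨B of multiplicity exactly 1 and α is not a root of the characteristic polynomial of B^∨B. -/

import Mathlib

open Polynomial Matrix

private def swapFun {N : ℕ} (hN : Odd N) (i : Fin N) : Fin N :=
  if h0 : i.val = 0 then i
  else if h2 : i.val % 2 = 1 then
    ⟨i.val + 1, by obtain ⟨m, hm⟩ := hN; have := i.isLt; omega⟩
  else ⟨i.val - 1, by have := i.isLt; omega⟩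

private lemma swapFun_invol {N : ℕ} (hN : Odd N) : Function.Involutive (swapFun hN) := by
  have hval : ∀ j : Fin N, (swapFun hN j).val =
      if j.val = 0 then 0 else if j.val % 2 = 1 then j.val + 1 else j.val - 1 := by
    intro j
    unfold swapFun
    split_ifs <;> simp_all
  intro i
  have hi := i.isLt
  have hi2 : i.val % 2 = 0 ∨ i.val % 2 = 1 := Nat.mod_two_eq_zero_or_one _
  apply Fin.ext
  rw [hval, hval]
  split_ifs <;> first | omega | tauto

/-- **Lemma 4.5 (second part, odd case) of "Geometric non-vanishing" (Ulmer).**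
Let `F` be an infinite field, `N` an odd positive integer, `α ∈ F` with
`α ≠ 1`, and `δ ∈ F` nonzero.  Then there exists an invertible `N × N` matrix
`B` over `F` with `det B = δ` such that, writing `B^∨ = (Bᵀ)⁻¹` for the
inverse transpose, `1` is a root of the characteristic polynomial of `B^∨ * B`
of multiplicity exactly `1`, and `α` is not a root of that characteristic
polynomial. -/
theorem exists_det_eq_one_simple_eigenvalue_of_invTranspose_mul_self
    {F : Type*} [Field F] [Infinite F] {N : ℕ} (hNpos : 0 < N) (hNodd : Odd N)
    (α : F) (hα : α ≠ 1) (δ : F) (hδ : δ ≠ 0) :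
    ∃ B : Matrix (Fin N) (Fin N) F, IsUnit B.det ∧ B.det = δ ∧
      Polynomial.rootMultiplicity 1 (B.transpose⁻¹ * B).charpoly = 1 ∧
      ¬ (B.transpose⁻¹ * B).charpoly.IsRoot α := by
  classical
  haveI : NeZero N := ⟨hNpos.ne'⟩
  obtain ⟨t, ht⟩ := Infinite.exists_notMem_finset ({0, 1, α, α⁻¹} : Finset F)
  simp only [Finset.mem_insert, Finset.mem_singleton, not_or] at ht
  obtain ⟨ht0, ht1, htα, htαi⟩ := ht
  set σ : Equiv.Perm (Fin N) := (swapFun_invol hNodd).toPerm with hσdef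
  have hσ_apply : ∀ i, σ i = swapFun hNodd i := fun _ => rfl
  set d : Fin N → F := fun i => if i.val = 0 then 1 else if i.val % 2 = 1 then t else t⁻¹ with hd
  set s : F := ((Equiv.Perm.sign σ : ℤ) : F) with hs
  have hs0 : s ≠ 0 := by
    rcases Int.units_eq_one_or (Equiv.Perm.sign σ) with h | h <;> simp [hs, h]
  set p : F := ∏ i ∈ Finset.univ.erase (0 : Fin N),
      (if (i : Fin N).val % 2 = 1 then (1 : F) else t) with hp
  have hp0 : p ≠ 0 := Finset.prod_ne_zero_iff.2 fun i _ => by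
    split <;> simp [ht0]
  set c : F := δ * (s * p)⁻¹ with hc
  set e : Fin N → F := fun i => if i.val = 0 then c else if i.val % 2 = 1 then 1 else t with he
  set B : Matrix (Fin N) (Fin N) F := Matrix.diagonal e * σ.permMatrix F with hB
  have hB_apply : ∀ i j, B i j = if σ i = j then e i else 0 := by
    intro i j
    simp [hB, Matrix.diagonal_mul, Equiv.Perm.permMatrix, PEquiv.toMatrix_apply,
      Equiv.toPEquiv_apply, Option.mem_def, mul_ite, mul_one, mul_zero, eq_comm]
  -- determinant
  have hprod : ∏ i, e i = c * p := by
    rw [← Finset.mul_prod_erase Finset.univ e (Finset.mem_univ 0)]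
    have h1 : e 0 = c := by simp [he]
    rw [h1]
    congr 1
    refine Finset.prod_congr rfl fun i hi => ?_
    have h0 : i.val ≠ 0 := by
      intro h
      exact (Finset.mem_erase.1 hi).1 (Fin.ext (by simp [h]))
    simp [he, h0, (Finset.mem_erase.1 hi).1]
  have hdetB : B.det = δ := by
    rw [hB, Matrix.det_mul, Matrix.det_diagonal, Matrix.det_permutation, hprod]
    have : ((Equiv.Perm.sign σ : ℤ) : F) = s := rfl
    rw [this, hc]
    field_simp
  have hU : IsUnit B.det := isUnit_iff_ne_zero.2 (by rw [hdetB]; exact hδ)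
  -- key entrywise relation
  have key : ∀ i : Fin N, e i = e (σ i) * d (σ i) := by
    intro i
    have hi := i.isLt
    by_cases h0 : i.val = 0
    · have hfix : σ i = i := by
        apply Fin.ext; simp [hσ_apply, swapFun, h0]
      rw [hfix]
      simp [he, hd, h0, (Fin.ext (by simp [h0]) : i = 0)]
    · by_cases h2 : i.val % 2 = 1
      · have hσi : (σ i).val = i.val + 1 := by simp [hσ_apply, swapFun, h0, h2]
        have h0' : ¬ (σ i).val = 0 := by omega
        have h2' : ¬ (σ i).val % 2 = 1 := by omega
        simp only [he, hd, if_neg h0, if_pos h2, if_neg h0', if_neg h2']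
        exact (mul_inv_cancel₀ ht0).symm
      · have hσi : (σ i).val = i.val - 1 := by simp [hσ_apply, swapFun, h0, h2]
        have h0' : ¬ (σ i).val = 0 := by omega
        have h2' : (σ i).val % 2 = 1 := by omega
        simp only [he, hd, if_neg h0, if_neg h2, if_neg h0', if_pos h2']
        rw [one_mul]
  have hBD : B = Bᵀ * Matrix.diagonal d := by
    ext i j
    rw [Matrix.mul_diagonal, Matrix.transpose_apply, hB_apply, hB_apply]
    have hsym : σ j = i ↔ σ i = j := by
      constructor <;> intro h <;> rw [← h] <;>
        exact swapFun_invol hNodd _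
    by_cases h : σ i = j
    · rw [if_pos h, if_pos (hsym.2 h), ← h]
      exact key i
    · rw [if_neg h, if_neg fun hh => h (hsym.1 hh), zero_mul]
  have hUT : IsUnit Bᵀ.det := by rwa [Matrix.det_transpose]
  have hconj : Bᵀ⁻¹ * B = Matrix.diagonal d := by
    have h1 : Bᵀ⁻¹ * B = Bᵀ⁻¹ * (Bᵀ * Matrix.diagonal d) := by rw [← hBD]
    rw [h1, ← Matrix.mul_assoc, Matrix.nonsing_inv_mul _ hUT, Matrix.one_mul]
  -- charpoly of the diagonal
  have hcm : charmatrix (Matrix.diagonal d) =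
      Matrix.diagonal fun i => (X : F[X]) - C (d i) := by
    ext i j
    by_cases h : i = j
    · subst h
      rw [charmatrix_apply_eq, Matrix.diagonal_apply_eq, Matrix.diagonal_apply_eq]
    · rw [charmatrix_apply_ne _ _ _ h, Matrix.diagonal_apply_ne _ h,
        Matrix.diagonal_apply_ne _ h, map_zero, neg_zero]
  have hchar : (Matrix.diagonal d).charpoly = ∏ i, (X - C (d i)) := by
    rw [Matrix.charpoly, hcm, Matrix.det_diagonal]
  set q : F[X] := ∏ i ∈ Finset.univ.erase (0 : Fin N), (X - C (d i)) with hq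
  have hsplit : ∏ i, ((X : F[X]) - C (d i)) = (X - C 1) * q := by
    have h0 : d 0 = 1 := by simp [hd]
    rw [← Finset.mul_prod_erase Finset.univ _ (Finset.mem_univ 0), h0]
  have hd_ne : ∀ i ∈ Finset.univ.erase (0 : Fin N), d i ≠ 1 ∧ d i ≠ α := by
    intro i hi
    have h0 : i.val ≠ 0 := by
      intro h
      exact (Finset.mem_erase.1 hi).1 (Fin.ext (by simp [h]))
    by_cases h2 : i.val % 2 = 1
    · simp only [hd, if_neg h0, if_pos h2]
      exact ⟨ht1, htα⟩
    · simp only [hd, if_neg h0, if_neg h2]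
      refine ⟨fun h => ht1 (inv_eq_one.mp h), fun h => htαi ?_⟩
      rw [← h, inv_inv]
  have hqeval : ∀ x : F, q.eval x = ∏ i ∈ Finset.univ.erase (0 : Fin N), (x - d i) := by
    intro x
    simp [hq, Polynomial.eval_prod]
  have hq1 : ¬ q.IsRoot 1 := by
    simp only [Polynomial.IsRoot, hqeval]
    exact Finset.prod_ne_zero_iff.2 fun i hi =>
      sub_ne_zero.2 fun h => (hd_ne i hi).1 h.symm
  have hqne : q ≠ 0 := fun h => hq1 (by simp [h])
  have hcp : (Bᵀ⁻¹ * B).charpoly = (X - C 1) * q := by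
    rw [hconj, hchar, hsplit]
  refine ⟨B, hU, hdetB, ?_, ?_⟩
  · rw [hcp, Polynomial.rootMultiplicity_mul (mul_ne_zero (X_sub_C_ne_zero 1) hqne),
      Polynomial.rootMultiplicity_X_sub_C_self,
      Polynomial.rootMultiplicity_eq_zero hq1]
  · rw [hcp]
    simp only [Polynomial.IsRoot, Polynomial.eval_mul, Polynomial.eval_sub,
      Polynomial.eval_X, Polynomial.eval_C, mul_eq_zero, not_or, hqeval]
    refine ⟨sub_ne_zero.2 hα, Finset.prod_ne_zero_iff.2 fun i hi =>
      sub_ne_zero.2 fun h => (hd_ne i hi).2 h.symm⟩
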